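/- arXiv:1312.2795 — 2 statements merged into one kernel-verified Lean document; each statement's English description precedes it below -/
import Mathlib

section
/- Let z ∈ ℂ^{N×M}, let C be a nonempty set of entrywise-nonnegative real N×M matrices, and define E := {y ∈ ℂ^{N×M} : |y| ∈ C}, where |y| is the entrywise absolute value. If m* ∈ C minimizes ‖m − |z|‖_F over m ∈ C, then the matrix y* with entries y*_{ij} = m*_{ij}·(e^{i∠z})_{ij} (where (e^{i∠z})_{ij} = z_{ij}/|z_{ij}| if z_{ij} ≠ 0 and 1 otherwise) belongs to E and minimizes ‖y − z‖_F over y ∈ E; moreover inf_{y ∈ E} ‖y − z‖_F = inf_{m ∈ C} ‖m − |z|‖_F. -/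
open Classical

/-- Projection onto a set of complex matrices constrained through
their entrywise magnitudes. Let `C` be a nonempty set of entrywise-nonnegative
real `N×M` matrices and `E = {y : |y| ∈ C}`. If `m⋆ ∈ C` minimizes `‖m - |z|‖_F`
over `C`, then `y⋆` with entries `m⋆_{ij}·(e^{i∠z})_{ij}` belongs to `E` and
minimizes `‖y - z‖_F` over `E`; moreover the two infima coincide. -/
theorem projection_onto_magnitude_constrained_set
    {N M : ℕ} (z : Matrix (Fin N) (Fin M) ℂ)
    (C : Set (Matrix (Fin N) (Fin M) ℝ)) (hC : C.Nonempty)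
    (hCpos : ∀ m ∈ C, ∀ i j, 0 ≤ m i j)
    (mstar : Matrix (Fin N) (Fin M) ℝ) (hmem : mstar ∈ C)
    (hmin : ∀ m ∈ C,
      Real.sqrt (∑ i, ∑ j, (mstar i j - ‖z i j‖) ^ 2) ≤
        Real.sqrt (∑ i, ∑ j, (m i j - ‖z i j‖) ^ 2)) :
    let phase : Matrix (Fin N) (Fin M) ℂ := fun i j =>
      if z i j = 0 then 1 else z i j / (‖z i j‖ : ℂ)
    let E : Set (Matrix (Fin N) (Fin M) ℂ) :=
      {y | (fun i j => ‖y i j‖) ∈ C}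
    let ystar : Matrix (Fin N) (Fin M) ℂ := fun i j => (mstar i j : ℂ) * phase i j
    ystar ∈ E ∧
    (∀ y ∈ E,
      Real.sqrt (∑ i, ∑ j, ‖ystar i j - z i j‖ ^ 2) ≤
        Real.sqrt (∑ i, ∑ j, ‖y i j - z i j‖ ^ 2)) ∧
    sInf {d : ℝ | ∃ y ∈ E, d = Real.sqrt (∑ i, ∑ j, ‖y i j - z i j‖ ^ 2)} =
      sInf {d : ℝ | ∃ m ∈ C, d = Real.sqrt (∑ i, ∑ j, (m i j - ‖z i j‖) ^ 2)} := by
  intro phase E ystar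
  have hphase : ∀ i j, ‖phase i j‖ = 1 := by
    intro i j
    by_cases h : z i j = 0
    · simp [phase, h]
    · have hz : ‖z i j‖ ≠ 0 := by simpa using h
      simp [phase, h, norm_div, Complex.norm_real, abs_of_nonneg (norm_nonneg (z i j)),
        div_self hz]
  have habs : ∀ i j, ‖ystar i j‖ = mstar i j := by
    intro i j
    simp [ystar, norm_mul, hphase i j, Complex.norm_real, abs_of_nonneg (hCpos mstar hmem i j)]
  have hmemE : ystar ∈ E := by
    have : (fun i j => ‖ystar i j‖) = mstar := by
      funext i j; exact habs i j
    show (fun i j => ‖ystar i j‖) ∈ C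
    rw [this]; exact hmem
  -- key pointwise identity
  have key : ∀ i j, ‖ystar i j - z i j‖ = |mstar i j - ‖z i j‖| := by
    intro i j
    by_cases h : z i j = 0
    · simp [ystar, phase, h, Complex.norm_real, abs_of_nonneg (hCpos mstar hmem i j)]
    · have hz : (‖z i j‖ : ℝ) ≠ 0 := by simpa using h
      have hzc : ((‖z i j‖ : ℝ) : ℂ) ≠ 0 := by exact_mod_cast hz
      have hdecomp : ystar i j - z i j
          = ((mstar i j - ‖z i j‖ : ℝ) : ℂ) * phase i j := by
        simp only [ystar, phase, if_neg h, Complex.ofReal_sub]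
        field_simp
      rw [hdecomp, norm_mul, hphase i j, Complex.norm_real, Real.norm_eq_abs, mul_one]
  have sumEq : (∑ i, ∑ j, ‖ystar i j - z i j‖ ^ 2)
      = ∑ i, ∑ j, (mstar i j - ‖z i j‖) ^ 2 := by
    refine Finset.sum_congr rfl fun i _ => Finset.sum_congr rfl fun j _ => ?_
    rw [key i j, sq_abs]
  -- part 2: minimality over E
  have part2 : ∀ y ∈ E,
      Real.sqrt (∑ i, ∑ j, ‖ystar i j - z i j‖ ^ 2) ≤
        Real.sqrt (∑ i, ∑ j, ‖y i j - z i j‖ ^ 2) := by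
    intro y hy
    have hyC : (fun i j => ‖y i j‖) ∈ C := hy
    calc Real.sqrt (∑ i, ∑ j, ‖ystar i j - z i j‖ ^ 2)
        = Real.sqrt (∑ i, ∑ j, (mstar i j - ‖z i j‖) ^ 2) := by rw [sumEq]
      _ ≤ Real.sqrt (∑ i, ∑ j, (‖y i j‖ - ‖z i j‖) ^ 2) :=
          hmin _ hyC
      _ ≤ Real.sqrt (∑ i, ∑ j, ‖y i j - z i j‖ ^ 2) := by
          apply Real.sqrt_le_sqrt
          refine Finset.sum_le_sum fun i _ => Finset.sum_le_sum fun j _ => ?_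
          have h1 : |‖y i j‖ - ‖z i j‖|
              ≤ ‖y i j - z i j‖ :=
            abs_norm_sub_norm_le _ _
          calc (‖y i j‖ - ‖z i j‖) ^ 2
              = |‖y i j‖ - ‖z i j‖| ^ 2 := (sq_abs _).symm
            _ ≤ ‖y i j - z i j‖ ^ 2 := by
                exact pow_le_pow_left₀ (abs_nonneg _) h1 2
  refine ⟨hmemE, part2, ?_⟩
  -- part 3: equality of infima
  set v : ℝ := Real.sqrt (∑ i, ∑ j, (mstar i j - ‖z i j‖) ^ 2) with hv
  have hvE : v = Real.sqrt (∑ i, ∑ j, ‖ystar i j - z i j‖ ^ 2) := by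
    rw [sumEq]
  have hleast1 : IsLeast
      {d : ℝ | ∃ y ∈ E, d = Real.sqrt (∑ i, ∑ j, ‖y i j - z i j‖ ^ 2)} v := by
    constructor
    · exact ⟨ystar, hmemE, hvE⟩
    · rintro d ⟨y, hy, rfl⟩
      rw [hvE]; exact part2 y hy
  have hleast2 : IsLeast
      {d : ℝ | ∃ m ∈ C, d = Real.sqrt (∑ i, ∑ j, (m i j - ‖z i j‖) ^ 2)} v := by
    constructor
    · exact ⟨mstar, hmem, rfl⟩
    · rintro d ⟨m, hm, rfl⟩
      exact hmin m hm
  rw [hleast1.csInf_eq, hleast2.csInf_eq]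
end

section
/- Let H and K be Euclidean spaces, G : H → ℝ a convex function, L : H → K a linear map with adjoint L*, and let τ > 0, b ∈ K, s₀ ∈ H. Then the unique minimizer over s ∈ H of the preconditioned objective G(s) + (1/2)‖L s − b‖² + (1/2)⟨((1/τ)·Id − L*∘L)(s − s₀), s − s₀⟩ equals prox_{τG}( s₀ − τ L*(L s₀ − b) ), where prox_{τG}(c) is the unique minimizer over s ∈ H of τ G(s) + (1/2)‖s − c‖². -/
/-- Chambolle–Pock preconditioning. For convex `G : H → ℝ`, linear
`L : H → K`, `τ > 0`, `b ∈ K`, `s₀ ∈ H`, the unique minimizer of the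
preconditioned objective
`s ↦ G(s) + (1/2)‖L s - b‖² + (1/2)⟨((1/τ)·Id - L*∘L)(s - s₀), s - s₀⟩`
equals `prox_{τG}(s₀ - τ L*(L s₀ - b))`. Here `p = prox_{τG}(c)` is encoded as
the hypothesis that `p` is the (unique) minimizer of `s ↦ τ G(s) + (1/2)‖s - c‖²`
with `c = s₀ - τ L*(L s₀ - b)`, and the conclusion says `p` is the unique
minimizer of the preconditioned objective. -/
theorem preconditioned_update_is_prox
    {H K : Type*} [NormedAddCommGroup H] [InnerProductSpace ℝ H] [FiniteDimensional ℝ H]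
    [NormedAddCommGroup K] [InnerProductSpace ℝ K] [FiniteDimensional ℝ K]
    (G : H → ℝ) (hG : ConvexOn ℝ Set.univ G)
    (L : H →ₗ[ℝ] K) (τ : ℝ) (hτ : 0 < τ) (b : K) (s₀ : H) (p : H)
    (hp : ∀ s : H,
      τ * G p + (1 / 2) * ‖p - (s₀ - τ • (LinearMap.adjoint L) (L s₀ - b))‖ ^ 2 ≤
        τ * G s + (1 / 2) * ‖s - (s₀ - τ • (LinearMap.adjoint L) (L s₀ - b))‖ ^ 2)
    (hpu : ∀ s : H,
      τ * G s + (1 / 2) * ‖s - (s₀ - τ • (LinearMap.adjoint L) (L s₀ - b))‖ ^ 2 =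
          τ * G p + (1 / 2) * ‖p - (s₀ - τ • (LinearMap.adjoint L) (L s₀ - b))‖ ^ 2 →
        s = p) :
    let F : H → ℝ := fun s =>
      G s + (1 / 2) * ‖L s - b‖ ^ 2 +
        (1 / 2) *
          (inner ℝ ((1 / τ) • (s - s₀) - (LinearMap.adjoint L) (L (s - s₀))) (s - s₀) : ℝ)
    (∀ s : H, F p ≤ F s) ∧ (∀ s : H, F s = F p → s = p) := by
  intro F
  set w := (LinearMap.adjoint L) (L s₀ - b) with hw
  have key : ∀ s : H, F s = (1/τ) * (τ * G s + (1/2) * ‖s - (s₀ - τ • w)‖ ^ 2)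
      + ((1/2) * ‖L s₀ - b‖ ^ 2 - (τ/2) * ‖w‖ ^ 2) := by
    intro s
    have h1 : s - (s₀ - τ • w) = (s - s₀) + τ • w := by abel
    have h2 : L s - b = L (s - s₀) + (L s₀ - b) := by rw [map_sub]; abel
    have e1 : ‖s - (s₀ - τ • w)‖ ^ 2
        = ‖s - s₀‖ ^ 2 + 2 * (τ * inner ℝ (s - s₀) w) + τ ^ 2 * ‖w‖ ^ 2 := by
      rw [h1, @norm_add_sq_real, real_inner_smul_right, norm_smul,
        Real.norm_eq_abs, abs_of_pos hτ, mul_pow]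
    have e2 : ‖L s - b‖ ^ 2 = ‖L (s - s₀)‖ ^ 2
        + 2 * inner ℝ (L (s - s₀)) (L s₀ - b) + ‖L s₀ - b‖ ^ 2 := by
      rw [h2, @norm_add_sq_real]
    have e3 : (inner ℝ (s - s₀) w : ℝ) = inner ℝ (L (s - s₀)) (L s₀ - b) := by
      rw [hw, LinearMap.adjoint_inner_right]
    have e4 : (inner ℝ ((1/τ) • (s - s₀) - (LinearMap.adjoint L) (L (s - s₀))) (s - s₀) : ℝ)
        = (1/τ) * ‖s - s₀‖ ^ 2 - ‖L (s - s₀)‖ ^ 2 := by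
      rw [inner_sub_left, real_inner_smul_left, LinearMap.adjoint_inner_left,
        real_inner_self_eq_norm_sq, real_inner_self_eq_norm_sq]
    show G s + (1 / 2) * ‖L s - b‖ ^ 2 + (1 / 2) *
        (inner ℝ ((1 / τ) • (s - s₀) - (LinearMap.adjoint L) (L (s - s₀))) (s - s₀) : ℝ) = _
    rw [e1, e2, e4, e3]
    field_simp
    ring
  constructor
  · intro s
    rw [key p, key s]
    have h := hp s
    have h2 : (1/τ) * (τ * G p + (1/2) * ‖p - (s₀ - τ • w)‖ ^ 2)
        ≤ (1/τ) * (τ * G s + (1/2) * ‖s - (s₀ - τ • w)‖ ^ 2) :=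
      mul_le_mul_of_nonneg_left h (by positivity)
    linarith
  · intro s hs
    rw [key p, key s] at hs
    apply hpu
    have hne : (1/τ : ℝ) ≠ 0 := by positivity
    have := mul_left_cancel₀ hne (by linarith : (1/τ) * (τ * G s + (1/2) * ‖s - (s₀ - τ • w)‖ ^ 2)
      = (1/τ) * (τ * G p + (1/2) * ‖p - (s₀ - τ • w)‖ ^ 2))
    exact this
end
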